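/- Let R be a quasi-consistent Riordan array, i.e., the Riordan array determined by a nonnegative A-sequence (a_n) and Z-sequence (z_n) with z_n = a_{n+1} for all n. If (a_n) is a Pólya frequency (PF) sequence, then R is totally positive (TP). -/

import Mathlib

open Finset

lemma cauchy_binet_step1 {k N : ℕ} (A : Matrix (Fin k) (Fin N) ℝ) (B : Matrix (Fin N) (Fin k) ℝ) :
    (A * B).det = ∑ f : Fin k → Fin N, (∏ i, A i (f i)) * (B.submatrix f id).det := by
  classical
  have hrow : (fun i : Fin k => (A * B) i) = fun i => ∑ s : Fin N, A i s • B s := by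
    funext i j
    simp [Matrix.mul_apply, Finset.sum_apply]
  have : (A * B).det = Matrix.detRowAlternating.toMultilinearMap
      (fun i : Fin k => ∑ s : Fin N, A i s • B s) := by
    rw [show Matrix.detRowAlternating.toMultilinearMap
          (fun i : Fin k => ∑ s : Fin N, A i s • B s)
          = Matrix.detRowAlternating.toMultilinearMap (fun i : Fin k => (A * B) i) from by
        rw [hrow]]
    rfl
  rw [this, Matrix.detRowAlternating.toMultilinearMap.map_sum (fun i s => A i s • B s)]
  refine Finset.sum_congr rfl fun f _ => ?_
  have := Matrix.detRowAlternating.toMultilinearMap.map_smul_univ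
    (fun i : Fin k => A i (f i)) (fun i => B (f i))
  rw [smul_eq_mul] at this
  exact this

noncomputable def monoOf {k N : ℕ} (f : Fin k → Fin N) (hf : Function.Injective f) :
    Fin k → Fin N :=
  (Finset.image f Finset.univ).orderEmbOfFin
    (by rw [Finset.card_image_of_injective _ hf, Finset.card_univ, Fintype.card_fin])

lemma monoOf_strictMono {k N : ℕ} (f : Fin k → Fin N) (hf : Function.Injective f) :
    StrictMono (monoOf f hf) :=
  ((Finset.image f Finset.univ).orderEmbOfFin _).strictMono

noncomputable def permOf {k N : ℕ} (f : Fin k → Fin N) (hf : Function.Injective f) :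
    Equiv.Perm (Fin k) :=
  Equiv.ofBijective
    (fun i => ((Finset.image f Finset.univ).orderIsoOfFin
      (by rw [Finset.card_image_of_injective _ hf, Finset.card_univ, Fintype.card_fin])).symm
        ⟨f i, Finset.mem_image_of_mem f (Finset.mem_univ i)⟩)
    (Finite.injective_iff_bijective.mp (fun i j hij => by
      apply hf
      have := congrArg (((Finset.image f Finset.univ).orderIsoOfFin
        (by rw [Finset.card_image_of_injective _ hf, Finset.card_univ, Fintype.card_fin]))) hij
      simpa [Subtype.ext_iff] using this))

lemma monoOf_permOf {k N : ℕ} (f : Fin k → Fin N) (hf : Function.Injective f) (i : Fin k) :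
    monoOf f hf (permOf f hf i) = f i := by
  simp only [monoOf, permOf, Equiv.ofBijective_apply]
  rw [← Finset.coe_orderIsoOfFin_apply]
  simp

lemma cauchy_binet {k N : ℕ} (A : Matrix (Fin k) (Fin N) ℝ) (B : Matrix (Fin N) (Fin k) ℝ) :
    (A * B).det = ∑ f ∈ Finset.univ.filter (fun f : Fin k → Fin N => StrictMono f),
      (A.submatrix id f).det * (B.submatrix f id).det := by
  classical
  rw [cauchy_binet_step1]
  -- drop non-injective terms
  rw [← Finset.sum_filter_add_sum_filter_not Finset.univ (fun f : Fin k → Fin N =>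
    Function.Injective f)]
  have hzero : ∑ f ∈ Finset.univ.filter (fun f : Fin k → Fin N => ¬ Function.Injective f),
      (∏ i, A i (f i)) * (B.submatrix f id).det = 0 := by
    refine Finset.sum_eq_zero fun f hfmem => ?_
    rw [Finset.mem_filter] at hfmem
    obtain ⟨i, j, hij, hne⟩ := Function.not_injective_iff.mp hfmem.2
    have : (B.submatrix f id).det = 0 :=
      Matrix.det_zero_of_row_eq hne (by funext c; simp [Matrix.submatrix_apply, hij])
    rw [this, mul_zero]
  rw [hzero, add_zero]
  -- group injective maps as strict mono ∘ permutation
  have hgroup : ∑ f ∈ Finset.univ.filter (fun f : Fin k → Fin N => Function.Injective f),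
      (∏ i, A i (f i)) * (B.submatrix f id).det
      = ∑ p ∈ (Finset.univ.filter (fun g : Fin k → Fin N => StrictMono g)) ×ˢ
          (Finset.univ : Finset (Equiv.Perm (Fin k))),
        (∏ i, A i (p.1 (p.2 i))) * (B.submatrix (p.1 ∘ p.2) id).det := by
    refine Finset.sum_nbij'
      (fun f => if hf : Function.Injective f then (monoOf f hf, permOf f hf)
        else (f, 1))
      (fun p => p.1 ∘ p.2) ?_ ?_ ?_ ?_ ?_
    · intro f hfm
      rw [Finset.mem_filter] at hfm
      rw [dif_pos hfm.2]
      simp only [Finset.mem_product, Finset.mem_filter, Finset.mem_univ, true_and, and_true]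
      exact monoOf_strictMono f hfm.2
    · intro p hpm
      rw [Finset.mem_product, Finset.mem_filter] at hpm
      simp only [Finset.mem_filter, Finset.mem_univ, true_and]
      exact hpm.1.2.injective.comp p.2.injective
    · intro f hfm
      rw [Finset.mem_filter] at hfm
      rw [dif_pos hfm.2]
      funext i
      exact monoOf_permOf f hfm.2 i
    · intro p hpm
      rw [Finset.mem_product, Finset.mem_filter] at hpm
      have hg := hpm.1.2
      have hinj : Function.Injective (p.1 ∘ p.2) := hg.injective.comp p.2.injective
      rw [dif_pos hinj]
      have himg : Finset.image (p.1 ∘ ⇑p.2) Finset.univ = Finset.image p.1 Finset.univ := by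
        rw [show (p.1 ∘ ⇑p.2) = p.1 ∘ ⇑p.2 from rfl]
        rw [← Finset.image_image]
        congr 1
        exact Finset.image_univ_equiv p.2
      have hm : monoOf (p.1 ∘ p.2) hinj = p.1 := by
        refine (Finset.orderEmbOfFin_unique _ ?_ hg).symm
        intro x
        rw [show ((Finset.image (p.1 ∘ ⇑p.2) Finset.univ)) = Finset.image p.1 Finset.univ
          from himg]
        exact Finset.mem_image_of_mem _ (Finset.mem_univ x)
      have hp : permOf (p.1 ∘ p.2) hinj = p.2 := by
        apply Equiv.ext
        intro i
        apply hg.injective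
        have h1 : monoOf (p.1 ∘ p.2) hinj (permOf (p.1 ∘ p.2) hinj i) = (p.1 ∘ p.2) i :=
          monoOf_permOf _ hinj i
        rw [hm] at h1
        exact h1
      ext <;> simp [hm, hp]
    · intro f hfm
      rw [Finset.mem_filter] at hfm
      rw [dif_pos hfm.2]
      have hfe : monoOf f hfm.2 ∘ ⇑(permOf f hfm.2) = f := funext (monoOf_permOf f hfm.2)
      rw [hfe]
      simp only [monoOf_permOf]
  rw [hgroup, Finset.sum_product]
  refine Finset.sum_congr rfl fun g hg => ?_
  rw [Finset.mem_filter] at hg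
  have hgm := hg.2
  -- inner sum over permutations
  have key : ∀ σ : Equiv.Perm (Fin k),
      (B.submatrix (g ∘ σ) id).det = Equiv.Perm.sign σ * (B.submatrix g id).det := by
    intro σ
    have : B.submatrix (g ∘ ⇑σ) id = (B.submatrix g id).submatrix σ id := by
      rw [Matrix.submatrix_submatrix]
      rfl
    rw [this, Matrix.det_permute]
  calc ∑ σ : Equiv.Perm (Fin k), (∏ i, A i (g (σ i))) * (B.submatrix (g ∘ σ) id).det
      = (∑ σ : Equiv.Perm (Fin k), (Equiv.Perm.sign σ : ℝ) * ∏ i, A i (g (σ i)))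
          * (B.submatrix g id).det := by
        rw [Finset.sum_mul]
        refine Finset.sum_congr rfl fun σ _ => ?_
        rw [key σ]
        push_cast
        ring
    _ = (A.submatrix id g).det * (B.submatrix g id).det := by
        congr 1
        rw [← Matrix.det_transpose (A.submatrix id g), Matrix.det_apply']
        refine Finset.sum_congr rfl fun σ _ => ?_
        congr 1

/-- An infinite real matrix `M` is totally positive (TP) if every minor
(determinant of a square submatrix with rows and columns chosen in
increasing order) is nonnegative. -/
def IsTP (M : ℕ → ℕ → ℝ) : Prop :=
  ∀ k : ℕ, ∀ rows cols : Fin k → ℕ, StrictMono rows → StrictMono cols →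
    0 ≤ (Matrix.of fun i j => M (rows i) (cols j)).det

/-- The Toeplitz matrix `[a_{i-j}]` of a sequence `a` (with `a m = 0` for `m < 0`). -/
def toeplitz (a : ℕ → ℝ) : ℕ → ℕ → ℝ := fun i j => if j ≤ i then a (i - j) else 0

/-- A nonnegative sequence is a Pólya frequency (PF) sequence
if its Toeplitz matrix is TP. -/
def IsPF (a : ℕ → ℝ) : Prop := IsTP (toeplitz a)

theorem quasiConsistent_riordan_TP_of_PF (a z : ℕ → ℝ) (ha : ∀ n, 0 ≤ a n) (hz : ∀ n, 0 ≤ z n)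
    (hcons : ∀ n, z n = a (n + 1))
    (R : ℕ → ℕ → ℝ)
    (hR00 : R 0 0 = 1)
    (htri : ∀ n k, n < k → R n k = 0)
    (hZ : ∀ n, R (n + 1) 0 = ∑ j ∈ Finset.range (n + 1), z j * R n j)
    (hA : ∀ n k, R (n + 1) (k + 1) = ∑ j ∈ Finset.range (n + 1), a j * R n (k + j))
    (hPF : IsPF a) :
    IsTP R := by
  classical
  -- the production-matrix style recurrence
  have hstep : ∀ n c, R (n + 1) c
      = ∑ s ∈ Finset.range (n + 1), R n s * toeplitz a (s + 1) c := by
    intro n c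
    cases c with
    | zero =>
      rw [hZ n]
      refine Finset.sum_congr rfl fun j _ => ?_
      have h1 : toeplitz a (j + 1) 0 = a (j + 1) := by simp [toeplitz]
      rw [h1, hcons j, mul_comm]
    | succ c =>
      rw [hA n c]
      have h1 : ∑ s ∈ Finset.range (n + 1), R n s * toeplitz a (s + 1) (c + 1)
          = ∑ s ∈ Finset.range (c + n + 1), R n s * toeplitz a (s + 1) (c + 1) := by
        refine Finset.sum_subset (Finset.range_subset_range.mpr (by omega)) ?_
        intro s hs hns
        rw [Finset.mem_range] at hns
        push_neg at hns
        rw [htri n s (by omega), zero_mul]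
      have h2 : ∑ s ∈ Finset.Ico c (c + n + 1), R n s * toeplitz a (s + 1) (c + 1)
          = ∑ s ∈ Finset.range (c + n + 1), R n s * toeplitz a (s + 1) (c + 1) := by
        refine Finset.sum_subset ?_ ?_
        · intro s hs
          rw [Finset.mem_Ico] at hs
          rw [Finset.mem_range]
          omega
        · intro s hs hns
          rw [Finset.mem_range] at hs
          rw [Finset.mem_Ico] at hns
          push_neg at hns
          have hsc : s < c := by omega
          have : toeplitz a (s + 1) (c + 1) = 0 := by
            rw [toeplitz, if_neg (by omega)]
          rw [this, mul_zero]
      have h3 : ∑ s ∈ Finset.Ico c (c + n + 1), R n s * toeplitz a (s + 1) (c + 1)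
          = ∑ j ∈ Finset.range (n + 1), a j * R n (c + j) := by
        rw [Finset.sum_Ico_eq_sum_range, show c + n + 1 - c = n + 1 from by omega]
        refine Finset.sum_congr rfl fun j _ => ?_
        have : toeplitz a (c + j + 1) (c + 1) = a j := by
          rw [toeplitz, if_pos (by omega), show c + j + 1 - (c + 1) = j from by omega]
        rw [this, mul_comm]
      rw [h1, ← h2, h3]
  -- main induction
  have main : ∀ N k (rows cols : Fin k → ℕ), StrictMono rows → StrictMono cols →
      (∀ i, rows i < N) → 0 ≤ (Matrix.of fun i j => R (rows i) (cols j)).det := by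
    intro N
    induction N with
    | zero =>
      intro k rows cols _ _ hlt
      match k with
      | 0 => simp [Matrix.det_isEmpty]
      | k + 1 => exact absurd (hlt 0) (by omega)
    | succ N ihN =>
      intro k
      induction k with
      | zero =>
        intro rows cols _ _ _
        simp [Matrix.det_isEmpty]
      | succ k ihk =>
        intro rows cols hr hc hlt
        by_cases h0 : rows 0 = 0
        · by_cases hc0 : cols 0 = 0
          · -- expand along the first row
            rw [Matrix.det_succ_row_zero, Fin.sum_univ_succ]
            have hz0 : ∀ j : Fin k, (Matrix.of fun i j => R (rows i) (cols j)) 0 j.succ = 0 := by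
              intro j
              have : 0 < cols j.succ := by
                have := hc (show (0 : Fin (k+1)) < j.succ from Fin.succ_pos j)
                omega
              simp only [Matrix.of_apply, h0]
              exact htri 0 (cols j.succ) this
            rw [Finset.sum_eq_zero (fun j _ => by rw [hz0 j, mul_zero, zero_mul]), add_zero]
            simp only [Matrix.of_apply, h0, hc0, hR00, Fin.val_zero, pow_zero, one_mul]
            have hsub : ((Matrix.of fun i j => R (rows i) (cols j)).submatrix Fin.succ
                (Fin.succAbove 0))
                = (Matrix.of fun i j => R ((rows ∘ Fin.succ) i) ((cols ∘ Fin.succ) j)) := by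
              ext i j
              simp [Matrix.submatrix_apply, Fin.succAbove_zero]
            rw [hsub]
            exact ihk (rows ∘ Fin.succ) (cols ∘ Fin.succ)
              (hr.comp Fin.strictMono_succ) (hc.comp Fin.strictMono_succ)
              (fun i => hlt i.succ)
          · -- first row is zero
            have hdet : (Matrix.of fun i j => R (rows i) (cols j)).det = 0 := by
              refine Matrix.det_eq_zero_of_row_eq_zero 0 fun j => ?_
              have h01 : 0 < cols j := by
                have := hc.monotone (Fin.zero_le j)
                omega
              simp only [Matrix.of_apply, h0]
              exact htri 0 (cols j) h01
            rw [hdet]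
        · -- rows all positive: use the recurrence and Cauchy-Binet
          have h1 : ∀ i : Fin (k+1), 1 ≤ rows i := by
            intro i
            have : rows 0 ≤ rows i := hr.monotone (Fin.zero_le i)
            omega
          set m : Fin (k+1) → ℕ := fun i => rows i - 1 with hm
          have hmlt : ∀ i, m i < N := fun i => by have := hlt i; have := h1 i; simp [hm]; omega
          have hms : StrictMono m := by
            intro i j hij
            have := hr hij
            have := h1 i
            simp [hm]
            omega
          set A : Matrix (Fin (k+1)) (Fin N) ℝ := Matrix.of fun i s => R (m i) s with hAdef
          set B : Matrix (Fin N) (Fin (k+1)) ℝ :=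
            Matrix.of fun s j => toeplitz a ((s : ℕ) + 1) (cols j) with hBdef
          have hmat : (Matrix.of fun i j => R (rows i) (cols j)) = A * B := by
            ext i j
            rw [Matrix.mul_apply]
            have hri : rows i = m i + 1 := by have := h1 i; simp [hm]; omega
            calc R (rows i) (cols j)
                = ∑ s ∈ Finset.range (m i + 1), R (m i) s * toeplitz a (s + 1) (cols j) := by
                  rw [hri, hstep]
              _ = ∑ s ∈ Finset.range N, R (m i) s * toeplitz a (s + 1) (cols j) := by
                  refine Finset.sum_subset (Finset.range_subset_range.mpr (by have := hmlt i; omega)) ?_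
                  intro s hs hns
                  rw [Finset.mem_range] at hns
                  push_neg at hns
                  rw [htri (m i) s (by omega), zero_mul]
              _ = ∑ s : Fin N, A i s * B s j := by
                  rw [← Fin.sum_univ_eq_sum_range (fun s => R (m i) s * toeplitz a (s + 1) (cols j)) N]
                  rfl
          rw [hmat, cauchy_binet]
          refine Finset.sum_nonneg fun g hg => ?_
          rw [Finset.mem_filter] at hg
          have hgm := hg.2
          refine mul_nonneg ?_ ?_
          · have := ihN (k+1) m (fun i => (g i : ℕ)) hms
              (fun i j hij => by exact_mod_cast hgm hij) hmlt
            convert this using 2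
            all_goals rfl
          · have := hPF (k+1) (fun i => (g i : ℕ) + 1) cols
              (fun i j hij => by
                have h := hgm hij
                rw [Fin.lt_def] at h
                dsimp only
                omega) hc
            convert this using 2
            all_goals rfl
  intro k rows cols hr hc
  exact main ((Finset.univ.sup rows) + 1) k rows cols hr hc
    (fun i => Nat.lt_succ_of_le (Finset.le_sup (Finset.mem_univ i)))
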